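/- Let f(z) = a·z + b be an affine self-map of ℂ with |a| > 1 (and a ≠ 1), let V be an infinite-dimensional quasi-Banach space of entire functions with continuous inclusion into 𝒪(ℂ) such that the composition operator C_f h = h∘f is a bounded operator on V. Derive a contradiction; equivalently, if C_f is bounded on such V with f(z) = az + b affine, then |a| ≤ 1. -/

import Mathlib

/-- Let `f(z) = a z + b` with `|a| > 1` (so `a ≠ 1`), and let `V` be an
infinite-dimensional quasi-Banach space of entire functions (quasi-norm `q` with
modulus of concavity `K`, functions realized by an injective linear map `ι`,
continuity of the inclusion being expressed by the boundedness of every derivative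
evaluation functional with respect to `q`).  If the composition operator
`C_f : v ↦ (ι v) ∘ f` is a bounded operator `T` on `V`, we get a contradiction. -/
theorem stmt16 (a b : ℂ) (hrep : 1 < ‖a‖) (ha1 : a ≠ 1)
    (V : Type*) [AddCommGroup V] [Module ℂ V]
    (q : V → ℝ) (K : ℝ) (hK : 1 ≤ K)
    (hq_nonneg : ∀ v, 0 ≤ q v)
    (hq_zero : ∀ v, q v = 0 → v = 0)
    (hq_smul : ∀ (c : ℂ) (v : V), q (c • v) = ‖c‖ * q v)
    (hq_add : ∀ v w, q (v + w) ≤ K * (q v + q w))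
    (ι : V →ₗ[ℂ] (ℂ → ℂ)) (hinj : Function.Injective ι)
    (hent : ∀ v, Differentiable ℂ (ι v))
    (hcont : ∀ (n : ℕ) (p : ℂ), ∃ C : ℝ, ∀ v,
      ‖iteratedDeriv n (ι v) p‖ ≤ C * q v)
    (hinf : ¬ FiniteDimensional ℂ V)
    (T : V →ₗ[ℂ] V)
    (hT : ∀ (v : V) (z : ℂ), ι (T v) z = ι v (a * z + b))
    (M : ℝ) (hbdd : ∀ v, q (T v) ≤ M * q v) :
    False := by
  classical
  have ha1' : (1 : ℂ) - a ≠ 0 := sub_ne_zero.mpr (Ne.symm ha1)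
  set p : ℂ := b / (1 - a) with hpdef
  have hp : a * p + b = p := by
    rw [hpdef]
    field_simp
    ring
  -- Chain rule at the fixed point
  have hA : ∀ (v : V) (n : ℕ),
      iteratedDeriv n (ι (T v)) p = a ^ n * iteratedDeriv n (ι v) p := by
    intro v n
    have hTv : ι (T v) = fun z => ι v (a * z + b) := funext (hT v)
    have hg : ContDiff ℂ n (fun w : ℂ => ι v (w + b)) :=
      ((hent v).comp (differentiable_id.add_const b)).contDiff
    have h1 : iteratedDeriv n (fun z : ℂ => ι v (a * z + b)) p
        = a ^ n * iteratedDeriv n (fun w : ℂ => ι v (w + b)) (a * p) :=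
      congrFun (iteratedDeriv_comp_const_mul hg a) p
    have h2 : iteratedDeriv n (fun w : ℂ => ι v (w + b)) (a * p)
        = iteratedDeriv n (ι v) (a * p + b) :=
      congrFun (iteratedDeriv_comp_add_const n (ι v) b) (a * p)
    rw [hTv, h1, h2, hp]
  -- Iterated powers of T
  have hB : ∀ (v : V) (k n : ℕ),
      iteratedDeriv n (ι ((T ^ k) v)) p = a ^ (n * k) * iteratedDeriv n (ι v) p := by
    intro v k n
    induction k with
    | zero => simp
    | succ k ih =>
      have hpow : (T ^ (k + 1)) v = T ((T ^ k) v) := by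
        rw [pow_succ']; rfl
      rw [hpow, hA ((T ^ k) v) n, ih, Nat.mul_succ, pow_add]
      ring
  -- V is nontrivial
  have hnz : ∃ v : V, v ≠ 0 := by
    by_contra h
    push_neg at h
    have : Subsingleton V := ⟨fun x y => by rw [h x, h y]⟩
    exact hinf inferInstance
  have hM0 : 0 ≤ M := by
    obtain ⟨v, hv⟩ := hnz
    have hqv : 0 < q v := (hq_nonneg v).lt_of_ne (fun h => hv (hq_zero v h.symm))
    nlinarith [hq_nonneg (T v), hbdd v]
  have hC : ∀ (v : V) (k : ℕ), q ((T ^ k) v) ≤ M ^ k * q v := by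
    intro v k
    induction k with
    | zero => simp
    | succ k ih =>
      have hpow : (T ^ (k + 1)) v = T ((T ^ k) v) := by
        rw [pow_succ']; rfl
      calc q ((T ^ (k + 1)) v) = q (T ((T ^ k) v)) := by rw [hpow]
        _ ≤ M * q ((T ^ k) v) := hbdd _
        _ ≤ M * (M ^ k * q v) := mul_le_mul_of_nonneg_left ih hM0
        _ = M ^ (k + 1) * q v := by ring
  -- Vanishing of high-order derivatives
  have hD : ∀ n : ℕ, M < ‖a‖ ^ n → ∀ v, iteratedDeriv n (ι v) p = 0 := by
    intro n hn v
    obtain ⟨C, hCb⟩ := hcont n p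
    set C' : ℝ := max C 0 with hC'def
    have hC'0 : 0 ≤ C' := le_max_right _ _
    have hCb' : ∀ w, ‖iteratedDeriv n (ι w) p‖ ≤ C' * q w := fun w =>
      (hCb w).trans (mul_le_mul_of_nonneg_right (le_max_left _ _) (hq_nonneg w))
    set r : ℝ := ‖a‖ ^ n with hrdef
    have hr0 : 0 < r := pow_pos (lt_trans one_pos hrep) n
    have key : ∀ k : ℕ, ‖iteratedDeriv n (ι v) p‖
        ≤ C' * q v * (M / r) ^ k := by
      intro k
      have h1 := hCb' ((T ^ k) v)
      rw [hB v k n] at h1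
      rw [norm_mul, norm_pow] at h1
      rw [show ‖a‖ ^ (n * k) = r ^ k by rw [hrdef, ← pow_mul, mul_comm]] at h1
      have h2 : r ^ k * ‖iteratedDeriv n (ι v) p‖ ≤ C' * (M ^ k * q v) :=
        h1.trans (mul_le_mul_of_nonneg_left (hC v k) hC'0)
      rw [div_pow, mul_comm (C' * q v) _, div_mul_eq_mul_div, le_div_iff₀ (pow_pos hr0 k)]
      calc ‖iteratedDeriv n (ι v) p‖ * r ^ k
          = r ^ k * ‖iteratedDeriv n (ι v) p‖ := by ring
        _ ≤ C' * (M ^ k * q v) := h2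
        _ = M ^ k * (C' * q v) := by ring
    have htend : Filter.Tendsto (fun k : ℕ => C' * q v * (M / r) ^ k)
        Filter.atTop (nhds 0) := by
      have h0 : Filter.Tendsto (fun k : ℕ => (M / r) ^ k) Filter.atTop (nhds 0) :=
        tendsto_pow_atTop_nhds_zero_of_lt_one (div_nonneg hM0 hr0.le)
          ((div_lt_one hr0).mpr hn)
      simpa using h0.const_mul (C' * q v)
    have hle : ‖iteratedDeriv n (ι v) p‖ ≤ 0 :=
      ge_of_tendsto htend (Filter.Eventually.of_forall key)
    exact norm_eq_zero.mp (le_antisymm hle (norm_nonneg _))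
  -- choose N with |a|^n > M for all n ≥ N
  obtain ⟨N, hN⟩ := pow_unbounded_of_one_lt M hrep
  have hvanish : ∀ v, ∀ n, N ≤ n → iteratedDeriv n (ι v) p = 0 := by
    intro v n hn
    refine hD n (lt_of_lt_of_le hN ?_) v
    exact pow_le_pow_right₀ (le_of_lt hrep) hn
  -- all derivatives vanish → element is zero
  have hzero : ∀ v : V, (∀ i : ℕ, iteratedDeriv i (ι v) p = 0) → v = 0 := by
    intro v hv
    have hι0 : ι v = 0 := by
      funext z
      have := Complex.taylorSeries_eq_of_entire' (c := p) (z := z) (hent v)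
      simp only [hv, mul_zero, zero_mul, tsum_zero] at this
      exact this.symm
    exact hinj (by rw [hι0, map_zero])
  -- linear map into a finite-dimensional space
  have hadd : ∀ (i : ℕ) (v w : V),
      iteratedDeriv i (ι (v + w)) p
        = iteratedDeriv i (ι v) p + iteratedDeriv i (ι w) p := by
    intro i v w
    rw [map_add, ← iteratedDerivWithin_univ,
      iteratedDerivWithin_add (Set.mem_univ p) uniqueDiffOn_univ
        (hent v).contDiff.contDiffWithinAt (hent w).contDiff.contDiffWithinAt,
      iteratedDerivWithin_univ, iteratedDerivWithin_univ]
  have hsmul : ∀ (i : ℕ) (c : ℂ) (v : V),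
      iteratedDeriv i (ι (c • v)) p = c * iteratedDeriv i (ι v) p := by
    intro i c v
    rw [map_smul, ← iteratedDerivWithin_univ,
      iteratedDerivWithin_const_smul (Set.mem_univ p) uniqueDiffOn_univ c
        (hent v).contDiff.contDiffWithinAt, iteratedDerivWithin_univ]
    rfl
  let Φ : V →ₗ[ℂ] (Fin N → ℂ) :=
    { toFun := fun v => fun i => iteratedDeriv i (ι v) p
      map_add' := fun v w => by
        funext i
        exact hadd i v w
      map_smul' := fun c v => by
        funext i
        exact hsmul i c v }
  have hΦinj : Function.Injective Φ := by
    intro v w hvw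
    have h0 : Φ (v - w) = 0 := by rw [map_sub, hvw, sub_self]
    have hlow : ∀ i : Fin N, iteratedDeriv i (ι (v - w)) p = 0 := fun i =>
      congrFun h0 i
    have hall : ∀ i : ℕ, iteratedDeriv i (ι (v - w)) p = 0 := by
      intro i
      by_cases hi : i < N
      · exact hlow ⟨i, hi⟩
      · exact hvanish (v - w) i (le_of_not_gt hi)
    have := hzero (v - w) hall
    exact sub_eq_zero.mp this
  exact hinf (FiniteDimensional.of_injective Φ hΦinj)
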